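/- Let A be an irreducible square matrix with nonnegative integer entries, indexed by a nonempty finite type, and let ρ be its spectral radius. Then there exist real constants c₁, c₂ > 0 such that for all n ∈ ℕ, c₁ ρ^n ≤ Σ_{i,j} (A^n)_{i j} ≤ c₂ ρ^n. (Interpreting A as the adjacency matrix of a strongly connected finite quiver, the number of paths of length n in the quiver grows as Θ(ρ^n).) -/

import Mathlib

open Finset


namespace PFGrowthAux

open Matrix Polynomial Filter
open scoped ENNReal NNReal

attribute [local instance] Matrix.linftyOpNormedRing Matrix.linftyOpNormedAlgebra

variable {ι : Type*} [Fintype ι] [DecidableEq ι] [Nonempty ι]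

lemma mem_spectrum_iff_root (B : Matrix ι ι ℂ) (z : ℂ) :
    z ∈ spectrum ℂ B ↔ z ∈ B.charpoly.roots := by
  rw [Polynomial.mem_roots (B.charpoly_monic.ne_zero), spectrum.mem_iff,
    Matrix.isUnit_iff_isUnit_det, isUnit_iff_ne_zero, not_not, IsRoot.def]
  have h : eval z B.charpoly = (algebraMap ℂ (Matrix ι ι ℂ) z - B).det := by
    rw [Matrix.charpoly, eval_det, matPolyEquiv_charmatrix]
    simp [Matrix.scalar_apply, Matrix.algebraMap_eq_diagonal, Pi.algebraMap_def]
  rw [h]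

lemma nnnorm_entry_le (M : Matrix ι ι ℂ) (i j : ι) : ‖M i j‖₊ ≤ ‖M‖₊ := by
  rw [Matrix.linfty_opNNNorm_def]
  refine le_trans ?_ (Finset.le_sup (Finset.mem_univ i))
  exact Finset.single_le_sum (f := fun j => ‖M i j‖₊) (fun _ _ => zero_le) (Finset.mem_univ j)

lemma nnnorm_le_sum (M : Matrix ι ι ℂ) : ‖M‖₊ ≤ ∑ i, ∑ j, ‖M i j‖₊ := by
  rw [Matrix.linfty_opNNNorm_def]
  refine Finset.sup_le fun i _ => ?_
  exact Finset.single_le_sum (f := fun i => ∑ j, ‖M i j‖₊) (fun _ _ => zero_le)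
    (Finset.mem_univ i)

lemma diag_pow_le (M : Matrix ι ι ℕ) (i : ι) : ∀ k, (M i i) ^ k ≤ (M ^ k) i i := by
  intro k
  induction k with
  | zero => simp [Matrix.one_apply]
  | succ k ih =>
    rw [pow_succ, pow_succ, Matrix.mul_apply]
    calc M i i ^ k * M i i ≤ (M ^ k) i i * M i i := Nat.mul_le_mul_right _ ih
    _ ≤ ∑ l, (M ^ k) i l * M l i :=
      Finset.single_le_sum (f := fun l => (M ^ k) i l * M l i)
        (fun _ _ => Nat.zero_le _) (Finset.mem_univ i)

lemma entry_le_diag (M : Matrix ι ι ℕ) {a b : ℕ} (n : ℕ) {i₀ i j : ι}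
    (ha : 1 ≤ (M ^ a) i₀ i) (hb : 1 ≤ (M ^ b) j i₀) :
    (M ^ n) i j ≤ (M ^ (a + n + b)) i₀ i₀ := by
  have h1 : (M ^ n) i j ≤ (M ^ a * M ^ n) i₀ j := by
    calc (M ^ n) i j = 1 * (M ^ n) i j := (one_mul _).symm
    _ ≤ (M ^ a) i₀ i * (M ^ n) i j := Nat.mul_le_mul_right _ ha
    _ ≤ ∑ l, (M ^ a) i₀ l * (M ^ n) l j :=
      Finset.single_le_sum (f := fun l => (M ^ a) i₀ l * (M ^ n) l j)
        (fun _ _ => Nat.zero_le _) (Finset.mem_univ i)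
    _ = (M ^ a * M ^ n) i₀ j := (Matrix.mul_apply).symm
  calc (M ^ n) i j ≤ (M ^ a * M ^ n) i₀ j * (M ^ b) j i₀ :=
        le_trans (Nat.le_mul_of_pos_right _ hb)
          (Nat.mul_le_mul_right ((M ^ b) j i₀) h1)
  _ ≤ ∑ l, (M ^ a * M ^ n) i₀ l * (M ^ b) l i₀ :=
      Finset.single_le_sum (f := fun l => (M ^ a * M ^ n) i₀ l * (M ^ b) l i₀)
        (fun _ _ => Nat.zero_le _) (Finset.mem_univ j)
  _ = (M ^ (a + n + b)) i₀ i₀ := by rw [← Matrix.mul_apply, ← pow_add, ← pow_add]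


lemma map_pow_nat (A : Matrix ι ι ℕ) (k : ℕ) :
    (A.map (fun m => (m : ℂ))) ^ k = (A ^ k).map (fun m => (m : ℂ)) := by
  have h : A.map (fun m => (m : ℂ)) = (Nat.castRingHom ℂ).mapMatrix A := rfl
  rw [h, ← map_pow]
  rfl

lemma spectralRadius_eq (B : Matrix ι ι ℂ) {ρ : ℝ}
    (hρ : IsGreatest {x : ℝ | ∃ z ∈ B.charpoly.roots, ‖z‖ = x} ρ) :
    spectralRadius ℂ B = ENNReal.ofReal ρ := by
  obtain ⟨z₀, hz₀, hz₀abs⟩ := hρ.1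
  apply le_antisymm
  · rw [spectralRadius]
    refine iSup₂_le fun z hz => ?_
    rw [← enorm_eq_nnnorm, ← ofReal_norm]
    exact ENNReal.ofReal_le_ofReal (hρ.2 ⟨z, (mem_spectrum_iff_root B z).mp hz, rfl⟩)
  · rw [← hz₀abs, ofReal_norm, enorm_eq_nnnorm, spectralRadius]
    exact le_iSup₂ (f := fun (z : ℂ) (_ : z ∈ spectrum ℂ B) => (‖z‖₊ : ℝ≥0∞)) z₀
      ((mem_spectrum_iff_root B z₀).mpr hz₀)

lemma rho_pow_le_norm (B : Matrix ι ι ℂ) {ρ : ℝ}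
    (h : ∃ z ∈ B.charpoly.roots, ‖z‖ = ρ) (n : ℕ) :
    ρ ^ n ≤ ‖B ^ n‖ := by
  obtain ⟨z, hz, rfl⟩ := h
  have hmem : z ^ n ∈ spectrum ℂ (B ^ n) :=
    spectrum.pow_image_subset B n ⟨z, (mem_spectrum_iff_root B z).mpr hz, rfl⟩
  calc ‖z‖ ^ n = ‖z ^ n‖ := by rw [norm_pow]
  _ ≤ ‖B ^ n‖ := spectrum.norm_le_norm_of_mem hmem

lemma norm_pow_eventually_le (B : Matrix ι ι ℂ) {ρ : ℝ} (hρ0 : 0 ≤ ρ)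
    (hrad : spectralRadius ℂ B = ENNReal.ofReal ρ) {ε : ℝ} (hε : 0 < ε) :
    ∃ N : ℕ, ∀ m ≥ N, ‖B ^ m‖ ≤ (ρ + ε) ^ m := by
  have gel := spectrum.pow_nnnorm_pow_one_div_tendsto_nhds_spectralRadius B
  rw [hrad] at gel
  have hlt : ENNReal.ofReal ρ < ENNReal.ofReal (ρ + ε) := by
    rw [ENNReal.ofReal_lt_ofReal_iff (by linarith)]; linarith
  obtain ⟨N, hN⟩ := Filter.eventually_atTop.mp (gel.eventually_lt_const hlt)
  refine ⟨max N 1, fun m hm => ?_⟩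
  have hm1 : 1 ≤ m := le_trans (le_max_right N 1) hm
  have hm0 : (m : ℝ) ≠ 0 := Nat.cast_ne_zero.mpr (by omega)
  have h := (hN m (le_trans (le_max_left N 1) hm)).le
  have h2 := ENNReal.rpow_le_rpow h (Nat.cast_nonneg m)
  rw [← ENNReal.rpow_mul, one_div, inv_mul_cancel₀ hm0, ENNReal.rpow_one,
    ENNReal.rpow_natCast, ← ENNReal.ofReal_pow (by linarith),
    ← enorm_eq_nnnorm, ← ofReal_norm] at h2
  exact (ENNReal.ofReal_le_ofReal_iff (pow_nonneg (by linarith) m)).mp h2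

lemma norm_le_sum (M : Matrix ι ι ℂ) : ‖M‖ ≤ ∑ i, ∑ j, ‖M i j‖ := by
  have := nnnorm_le_sum M
  rw [← NNReal.coe_le_coe] at this
  simpa using this

lemma norm_entry_le (M : Matrix ι ι ℂ) (i j : ι) : ‖M i j‖ ≤ ‖M‖ :=
  nnnorm_entry_le M i j

lemma diag_le_rho_pow (A : Matrix ι ι ℕ) {ρ : ℝ} (hρ0 : 0 ≤ ρ)
    (hrad : spectralRadius ℂ (A.map (fun m => (m : ℂ))) = ENNReal.ofReal ρ)
    (n : ℕ) (i₀ : ι) : ((A ^ n) i₀ i₀ : ℝ) ≤ ρ ^ n := by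
  rcases Nat.eq_zero_or_pos n with rfl | hn
  · simp [Matrix.one_apply_eq]
  suffices h : ∀ ε : ℝ, 0 < ε → ((A ^ n) i₀ i₀ : ℝ) ≤ (ρ + ε) ^ n by
    have t : Filter.Tendsto (fun k : ℕ => (ρ + 1 / ((k : ℝ) + 1)) ^ n)
        Filter.atTop (nhds (ρ ^ n)) := by
      have t1 : Filter.Tendsto (fun k : ℕ => ρ + 1 / ((k : ℝ) + 1))
          Filter.atTop (nhds (ρ + 0)) :=
        tendsto_const_nhds.add tendsto_one_div_add_atTop_nhds_zero_nat
      rw [add_zero] at t1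
      exact t1.pow n
    exact ge_of_tendsto' t fun k => h _ (by positivity)
  intro ε hε
  obtain ⟨N, hN⟩ := norm_pow_eventually_le (A.map (fun m => (m : ℂ))) hρ0 hrad hε
  set k := N + 1 with hk
  have hkN : N ≤ n * k := le_trans (Nat.le_succ N) (Nat.le_mul_of_pos_left k hn)
  have hentry : ((A ^ (n * k)) i₀ i₀ : ℝ) ≤ (ρ + ε) ^ (n * k) := by
    have he : ((A ^ (n * k)) i₀ i₀ : ℝ)
        = ‖((A.map (fun m => (m : ℂ))) ^ (n * k)) i₀ i₀‖ := by
      rw [map_pow_nat]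
      simp [Matrix.map_apply]
    rw [he]
    exact le_trans (norm_entry_le _ i₀ i₀) (hN _ hkN)
  have hchain : (((A ^ n) i₀ i₀ : ℝ)) ^ k ≤ ((ρ + ε) ^ n) ^ k := by
    calc (((A ^ n) i₀ i₀ : ℝ)) ^ k = ((((A ^ n) i₀ i₀) ^ k : ℕ) : ℝ) := by push_cast; ring
    _ ≤ ((A ^ (n * k)) i₀ i₀ : ℝ) := by
        have := diag_pow_le (A ^ n) i₀ k
        rw [← pow_mul] at this
        exact_mod_cast this
    _ ≤ (ρ + ε) ^ (n * k) := hentry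
    _ = ((ρ + ε) ^ n) ^ k := by rw [← pow_mul]
  exact (pow_le_pow_iff_left₀ (Nat.cast_nonneg _) (pow_nonneg (by linarith) n)
    (Nat.succ_ne_zero N)).mp hchain

end PFGrowthAux


theorem sum_pow_entries_irreducible_spectralRadius
    {ι : Type*} [Fintype ι] [DecidableEq ι] [Nonempty ι]
    (A : Matrix ι ι ℕ)
    (hirr : ∀ i j : ι, ∃ k : ℕ, 1 ≤ k ∧ 0 < (A ^ k) i j)
    (ρ : ℝ)
    (hρ : IsGreatest
      {x : ℝ | ∃ z ∈ (Matrix.charpoly (A.map (fun m => (m : ℂ)))).roots,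
        ‖z‖ = x} ρ) :
    ∃ c₁ c₂ : ℝ, 0 < c₁ ∧ 0 < c₂ ∧
      ∀ n : ℕ, c₁ * ρ ^ n ≤ ∑ i, ∑ j, (((A ^ n) i j : ℕ) : ℝ) ∧
        ∑ i, ∑ j, (((A ^ n) i j : ℕ) : ℝ) ≤ c₂ * ρ ^ n := by
  classical
  set B := A.map (fun m => (m : ℂ)) with hB
  have hρ0 : 0 ≤ ρ := by
    obtain ⟨z, _, h⟩ := hρ.1
    rw [← h]
    exact norm_nonneg z
  have hrad : spectralRadius ℂ B = ENNReal.ofReal ρ := PFGrowthAux.spectralRadius_eq B hρ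
  have hlow : ∀ n : ℕ, ρ ^ n ≤ ∑ i, ∑ j, (((A ^ n) i j : ℕ) : ℝ) := by
    intro n
    refine le_trans (PFGrowthAux.rho_pow_le_norm B hρ.1 n)
      (le_trans (PFGrowthAux.norm_le_sum _) (le_of_eq ?_))
    rw [hB, PFGrowthAux.map_pow_nat]
    simp [Matrix.map_apply]
  have i₀ : ι := Classical.arbitrary ι
  set M : ℝ := max 1 ρ with hM
  have hM0 : (0:ℝ) < M := lt_of_lt_of_le one_pos (le_max_left _ _)
  have hρM : ρ ≤ M := le_max_right _ _
  set a : ι → ℕ := fun i => (hirr i₀ i).choose with hadef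
  set b : ι → ℕ := fun j => (hirr j i₀).choose with hbdef
  refine ⟨1, ∑ i, ∑ j, M ^ (a i + b j), one_pos, ?_, fun n => ⟨by simpa using hlow n, ?_⟩⟩
  · exact Finset.sum_pos (fun i _ => Finset.sum_pos (fun j _ => pow_pos hM0 _)
      Finset.univ_nonempty) Finset.univ_nonempty
  · have key : ∀ i j : ι, (((A ^ n) i j : ℕ) : ℝ) ≤ M ^ (a i + b j) * ρ ^ n := by
      intro i j
      have hai : 1 ≤ (A ^ (a i)) i₀ i := (hirr i₀ i).choose_spec.2
      have hbj : 1 ≤ (A ^ (b j)) j i₀ := (hirr j i₀).choose_spec.2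
      have h1 : (A ^ n) i j ≤ (A ^ (a i + n + b j)) i₀ i₀ :=
        PFGrowthAux.entry_le_diag A n hai hbj
      have h2 : ((A ^ (a i + n + b j)) i₀ i₀ : ℝ) ≤ ρ ^ (a i + n + b j) :=
        PFGrowthAux.diag_le_rho_pow A hρ0 hrad _ i₀
      calc (((A ^ n) i j : ℕ) : ℝ) ≤ ((A ^ (a i + n + b j)) i₀ i₀ : ℝ) := by exact_mod_cast h1
      _ ≤ ρ ^ (a i + n + b j) := h2
      _ = ρ ^ (a i) * ρ ^ n * ρ ^ (b j) := by rw [pow_add, pow_add]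
      _ ≤ M ^ (a i) * ρ ^ n * M ^ (b j) := by
          have h3 : ρ ^ (a i) ≤ M ^ (a i) := pow_le_pow_left₀ hρ0 hρM _
          have h4 : ρ ^ (b j) ≤ M ^ (b j) := pow_le_pow_left₀ hρ0 hρM _
          exact mul_le_mul (mul_le_mul h3 le_rfl (pow_nonneg hρ0 n) (pow_pos hM0 _).le)
            h4 (pow_nonneg hρ0 _) (mul_nonneg (pow_pos hM0 _).le (pow_nonneg hρ0 n))
      _ = M ^ (a i + b j) * ρ ^ n := by rw [pow_add]; ring
    calc ∑ i, ∑ j, (((A ^ n) i j : ℕ) : ℝ) ≤ ∑ i, ∑ j, M ^ (a i + b j) * ρ ^ n :=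
      Finset.sum_le_sum fun i _ => Finset.sum_le_sum fun j _ => key i j
    _ = (∑ i, ∑ j, M ^ (a i + b j)) * ρ ^ n := by
        rw [Finset.sum_mul]
        exact Finset.sum_congr rfl fun i _ => by rw [Finset.sum_mul]
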